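/- Let E be a finite-dimensional real normed space, let V and L be complementary linear subspaces of E with h := dim V ≥ 1, and suppose C > 0 satisfies C‖P_L g‖ ≤ dist(g, V) for every g ∈ E; let 0 < α < C/2. Let Γ ⊆ E be a compact C_V(α)-set with μH^h(Γ) < ∞ and with Θ^h_*(μH^h⌞Γ, x) > 0 for μH^h-almost every x ∈ Γ. Then for every Borel set A ⊆ E one has μH^h(A ∩ Γ) = 0 if and only if μH^h(P_V(A ∩ Γ)) = 0; that is, the measure A ↦ μH^h(P_V(A ∩ Γ)) and the measure μH^h⌞Γ are mutually absolutely continuous. -/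

import Mathlib

open MeasureTheory Metric Filter Set
open scoped ENNReal Topology

variable {E : Type*}

/-- Lower `h`-density of a measure at a point. -/
noncomputable def lowerDensity [NormedAddCommGroup E] [MeasurableSpace E]
    (φ : Measure E) (h : ℝ) (x : E) : ℝ≥0∞ :=
  liminf (fun r : ℝ => φ (closedBall x r) / ENNReal.ofReal (r ^ h)) (𝓝[>] (0 : ℝ))

/-- The cone `C_V(α)` of all points whose distance from `V` is at most `α` times their norm. -/
def cone [NormedAddCommGroup E] [NormedSpace ℝ E] (V : Submodule ℝ E) (α : ℝ) : Set E :=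
  {w : E | infDist w (V : Set E) ≤ α * ‖w‖}

/-- A `C_V(α)`-set: all differences of pairs of points of `Γ` lie in the cone `C_V(α)`. -/
def IsConeSet [NormedAddCommGroup E] [NormedSpace ℝ E]
    (V : Submodule ℝ E) (α : ℝ) (Γ : Set E) : Prop :=
  ∀ p ∈ Γ, ∀ q ∈ Γ, q - p ∈ cone V α

/-- The projection onto `P` along the complementary subspace `Q`, viewed as a map `E → E`. -/
noncomputable def splitProj [NormedAddCommGroup E] [NormedSpace ℝ E]
    (P Q : Submodule ℝ E) (hc : IsCompl P Q) (g : E) : E :=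
  (P.linearProjOfIsCompl Q hc g : E)

theorem stmt17 [NormedAddCommGroup E] [NormedSpace ℝ E] [FiniteDimensional ℝ E]
    [MeasurableSpace E] [BorelSpace E]
    (V L : Submodule ℝ E) (hc : IsCompl V L) (h : ℕ) (h1 : 1 ≤ h)
    (hdim : Module.finrank ℝ V = h)
    (C : ℝ) (hC : 0 < C)
    (hproj : ∀ g : E, C * ‖splitProj L V hc.symm g‖ ≤ infDist g (V : Set E))
    (α : ℝ) (hα0 : 0 < α) (hαC : α < C / 2)
    (Γ : Set E) (hΓc : IsCompact Γ) (hΓ : IsConeSet V α Γ) (hfin : μH[(h : ℝ)] Γ < ⊤)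
    (hpos : ∀ᵐ x ∂(μH[(h : ℝ)].restrict Γ), 0 < lowerDensity (μH[(h : ℝ)].restrict Γ) h x) :
    ∀ A : Set E, MeasurableSet A →
      (μH[(h : ℝ)] (A ∩ Γ) = 0 ↔ μH[(h : ℝ)] (splitProj V L hc '' (A ∩ Γ)) = 0) := by
  intro A _
  set f : E → E := splitProj V L hc with hf
  have hd : (0 : ℝ) ≤ (h : ℝ) := Nat.cast_nonneg h
  -- f is globally Lipschitz
  have flin : IsLinearMap ℝ f := by
    constructor
    · intro x y; simp [hf, splitProj, map_add]
    · intro c x; simp [hf, splitProj, _root_.map_smul]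
  set fL : E →L[ℝ] E := LinearMap.toContinuousLinearMap (IsLinearMap.mk' f flin)
  have hfLip : LipschitzWith ‖fL‖₊ f := fL.lipschitz
  -- key lower bound on Γ
  have key : ∀ p ∈ Γ, ∀ q ∈ Γ, ‖q - p‖ ≤ 2 * ‖f q - f p‖ := by
    intro p hp q hq
    have hcone := hΓ p hp q hq
    have hL : C * ‖splitProj L V hc.symm (q - p)‖ ≤ α * ‖q - p‖ :=
      (hproj (q - p)).trans hcone
    have hLnorm : ‖splitProj L V hc.symm (q - p)‖ ≤ (α / C) * ‖q - p‖ := by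
      rw [div_mul_eq_mul_div, le_div_iff₀ hC, mul_comm]
      linarith [hL]
    have hsum : f (q - p) + splitProj L V hc.symm (q - p) = q - p := by
      exact
        Submodule.projection_add_projection_eq_self hc (q - p)
    have h2 : ‖q - p‖ ≤ ‖f (q - p)‖ + (α / C) * ‖q - p‖ := by
      calc ‖q - p‖ = ‖f (q - p) + splitProj L V hc.symm (q - p)‖ := by rw [hsum]
        _ ≤ ‖f (q - p)‖ + ‖splitProj L V hc.symm (q - p)‖ := norm_add_le _ _
        _ ≤ ‖f (q - p)‖ + (α / C) * ‖q - p‖ := by linarith [hLnorm]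
    have hαC' : α / C < 1 / 2 := by
      rw [div_lt_div_iff₀ hC (by norm_num)]; linarith
    have hfsub : f (q - p) = f q - f p := by
      simp [hf, splitProj, map_sub]
    have hn : (0 : ℝ) ≤ ‖q - p‖ := norm_nonneg _
    nlinarith [h2, hfsub ▸ h2]
  constructor
  · intro h0
    have := hfLip.hausdorffMeasure_image_le hd (A ∩ Γ)
    rw [h0, mul_zero] at this
    exact le_antisymm this zero_le
  · intro h0
    set S := A ∩ Γ with hS
    set T := f '' S with hT
    -- inverse map via choice
    classical
    set g : E → E := fun y => if hy : ∃ x ∈ S, f x = y then hy.choose else 0 with hg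
    have hgmem : ∀ y ∈ T, g y ∈ S ∧ f (g y) = y := by
      intro y hy
      obtain ⟨x, hx, hxy⟩ := hy
      have hex : ∃ x ∈ S, f x = y := ⟨x, hx, hxy⟩
      simp only [hg, dif_pos hex]
      exact ⟨hex.choose_spec.1, hex.choose_spec.2⟩
    have hgLip : LipschitzOnWith 2 g T := by
      rw [lipschitzOnWith_iff_dist_le_mul]
      intro y₁ hy₁ y₂ hy₂
      obtain ⟨hx₁, hfy₁⟩ := hgmem y₁ hy₁
      obtain ⟨hx₂, hfy₂⟩ := hgmem y₂ hy₂
      have := key (g y₂) hx₂.2 (g y₁) hx₁.2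
      rw [hfy₁, hfy₂] at this
      simpa [dist_eq_norm, NNReal.coe_two] using this
    have hScover : S ⊆ g '' T := by
      intro x hx
      have hyT : f x ∈ T := ⟨x, hx, rfl⟩
      obtain ⟨hgS, hgf⟩ := hgmem (f x) hyT
      have : ‖x - g (f x)‖ ≤ 2 * ‖f x - f (g (f x))‖ := key (g (f x)) hgS.2 x hx.2
      rw [hgf, sub_self, norm_zero, mul_zero] at this
      have hxg : x = g (f x) := by
        have := norm_sub_eq_zero_iff.mp (le_antisymm this (norm_nonneg _))
        exact this
      exact ⟨f x, hyT, hxg.symm⟩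
    refine le_antisymm ?_ zero_le
    calc μH[(h : ℝ)] S ≤ μH[(h : ℝ)] (g '' T) := measure_mono hScover
      _ ≤ (2 : ℝ≥0∞) ^ (h : ℝ) * μH[(h : ℝ)] T := by
          simpa using hgLip.hausdorffMeasure_image_le hd
      _ = 0 := by rw [h0, mul_zero]
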